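/- Every piecewise bilinear membrane X : [0,1]² → ℝ^d of order (m,n) admits a unique decomposition X = A∘Axis^{m,n} + R, where A : ℝ^{mn} → ℝ^d is a linear map and R is a membrane each of whose coordinates is a sum of a piecewise linear function of s alone and a piecewise linear function of t alone (with respect to the uniform grids). Consequently σ(X) = σ(A∘Axis^{m,n}). -/

import Mathlib

open MeasureTheory

noncomputable section

/-- The ordered simplex `0 ≤ t 0 ≤ t 1 ≤ ⋯ ≤ t (k-1) ≤ 1` in `Fin k → ℝ`. -/
def orderedSimplex (k : ℕ) : Set (Fin k → ℝ) :=
  {t | Monotone t ∧ ∀ a, t a ∈ Set.Icc (0 : ℝ) 1}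

/-- Iterated-integral (path) signature entry for a family of scalar coordinate
functions `f a : ℝ → ℝ`, i.e. `⟨σ(X), e_{i₁}* ⊗ ⋯ ⊗ e_{i_k}*⟩` with `f a = X_{i_a}`. -/
def pathSig {k : ℕ} (f : Fin k → ℝ → ℝ) : ℝ :=
  ∫ t in orderedSimplex k, ∏ a, deriv (f a) (t a)

/-- Mixed second partial derivative `∂²/∂s∂t`. -/
def d12 (f : ℝ → ℝ → ℝ) (s t : ℝ) : ℝ :=
  deriv (fun t' => deriv (fun s' => f s' t') s) t

/-- id-signature entry for a family of scalar membrane coordinate functions. -/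
def memSig {k : ℕ} (f : Fin k → ℝ → ℝ → ℝ) : ℝ :=
  ∫ p in (orderedSimplex k) ×ˢ (orderedSimplex k), ∏ a, d12 (f a) (p.1 a) (p.2 a)

/-- The `i`-th coordinate (0-indexed) of the canonical axis path of order `m`:
`0` on `[0, i/m]`, `m·s − i` on `[i/m, (i+1)/m]`, and `1` afterwards. -/
def axisCoord (m : ℕ) (i : Fin m) (s : ℝ) : ℝ :=
  max 0 (min 1 ((m : ℝ) * s - ((i : ℕ) : ℝ)))

/-- A function `ℝ → ℝ` that is affine on each interval `[i/m, (i+1)/m]` of the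
uniform grid of order `m`. -/
def PWLinearGrid (m : ℕ) (f : ℝ → ℝ) : Prop :=
  ∀ i : Fin m, ∃ b c : ℝ,
    ∀ s ∈ Set.Icc (((i : ℕ) : ℝ) / m) ((((i : ℕ) : ℝ) + 1) / m), f s = b * s + c

/-- A membrane that is biaffine on each grid rectangle
`[i/m,(i+1)/m] × [j/n,(j+1)/n]`. -/
def PWBilinear (m n d : ℕ) (X : ℝ → ℝ → Fin d → ℝ) : Prop :=
  ∀ (i : Fin m) (j : Fin n) (l : Fin d), ∃ a b c e : ℝ,
    ∀ s ∈ Set.Icc (((i : ℕ) : ℝ) / m) ((((i : ℕ) : ℝ) + 1) / m),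
      ∀ t ∈ Set.Icc (((j : ℕ) : ℝ) / n) ((((j : ℕ) : ℝ) + 1) / n),
        X s t l = a * s * t + b * s + c * t + e

/-- The decomposition property `X = A ∘ Axis^{m,n} + R` on `[0,1]²`, where each
coordinate of `R` is a sum of a piecewise linear function of `s` alone and a
piecewise linear function of `t` alone. -/
def AxisDecomp (m n d : ℕ) (X : ℝ → ℝ → Fin d → ℝ)
    (A : Matrix (Fin d) (Fin m × Fin n) ℝ) : Prop :=
  ∃ g h : Fin d → ℝ → ℝ,
    (∀ l, PWLinearGrid m (g l)) ∧ (∀ l, PWLinearGrid n (h l)) ∧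
    ∀ s ∈ Set.Icc (0:ℝ) 1, ∀ t ∈ Set.Icc (0:ℝ) 1, ∀ l : Fin d,
      X s t l = (∑ p : Fin m × Fin n, A l p * (axisCoord m p.1 s * axisCoord n p.2 t))
        + g l s + h l t

lemma affine_eq_of_Icc {u v b₁ c₁ b₂ c₂ : ℝ} (huv : u < v)
    (h : ∀ s ∈ Set.Icc u v, b₁ * s + c₁ = b₂ * s + c₂) : b₁ = b₂ ∧ c₁ = c₂ := by
  have h1 := h u ⟨le_refl u, huv.le⟩
  have h2 := h v ⟨huv.le, le_refl v⟩
  have hne : v - u ≠ 0 := sub_ne_zero.mpr huv.ne'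
  have hb : b₁ = b₂ := by
    have hx : b₁ * (v - u) = b₂ * (v - u) := by linear_combination h2 - h1
    exact mul_right_cancel₀ hne hx
  exact ⟨hb, by rw [hb] at h1; linarith⟩

lemma exists_strip {n : ℕ} (hn : 0 < n) {t : ℝ} (ht : t ∈ Set.Icc (0:ℝ) 1) :
    ∃ j : Fin n, ((j:ℕ):ℝ)/n ≤ t ∧ t ≤ (((j:ℕ):ℝ)+1)/n := by
  have hn' : (0:ℝ) < n := by exact_mod_cast hn
  have htn : (0:ℝ) ≤ t * n := mul_nonneg ht.1 hn'.le
  rcases le_or_gt (⌊t * n⌋₊) (n-1) with hc | hc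
  · refine ⟨⟨⌊t * n⌋₊, lt_of_le_of_lt hc (Nat.sub_lt hn Nat.one_pos)⟩, ?_, ?_⟩
    · rw [div_le_iff₀ hn']
      simpa using Nat.floor_le htn
    · rw [le_div_iff₀ hn']
      have := Nat.lt_floor_add_one (t * n)
      simp only [Fin.val_mk]
      push_cast
      linarith
  · refine ⟨⟨n-1, Nat.sub_lt hn Nat.one_pos⟩, ?_, ?_⟩
    · rw [div_le_iff₀ hn']
      have h1 : ((n-1 : ℕ):ℝ) ≤ (⌊t*n⌋₊ : ℝ) := by exact_mod_cast hc.le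
      have h2 : (⌊t*n⌋₊ : ℝ) ≤ t*n := Nat.floor_le htn
      simp only [Fin.val_mk]
      linarith
  
    · rw [le_div_iff₀ hn']
      have hcast : ((n-1:ℕ):ℝ) = (n:ℝ) - 1 := by
        have h1 : (1:ℕ) ≤ n := hn
        push_cast [h1]
        ring
      simp only [Fin.val_mk, hcast]
      nlinarith [ht.2, hn']

lemma exists_strip_open {m : ℕ} (hm : 0 < m) {s : ℝ} (hs : s ∈ Set.Icc (0:ℝ) 1)
    (hns : ∀ q : ℕ, q ≤ m → s ≠ (q:ℝ) / m) :
    ∃ i : Fin m, ((i:ℕ):ℝ)/m < s ∧ s < (((i:ℕ):ℝ)+1)/m := by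
  obtain ⟨i, h1, h2⟩ := exists_strip hm hs
  refine ⟨i, lt_of_le_of_ne h1 (fun hh => hns i (le_of_lt i.2) hh.symm), ?_⟩
  refine lt_of_le_of_ne h2 (fun hh => hns ((i:ℕ)+1) i.2 ?_)
  rw [hh]; push_cast; ring_nf

lemma axisCoord_eval {m : ℕ} (hm : 0 < m) (i q : Fin m) {s : ℝ}
    (h1 : ((i:ℕ):ℝ)/m ≤ s) (h2 : s ≤ (((i:ℕ):ℝ)+1)/m) :
    axisCoord m q s = (if (q:ℕ) < (i:ℕ) then 1 else 0)
      + ((m:ℝ)*s - ((i:ℕ):ℝ)) * (if q = i then 1 else 0) := by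
  have hm' : (0:ℝ) < m := by exact_mod_cast hm
  have hl : ((i:ℕ):ℝ) ≤ (m:ℝ) * s := by rw [div_le_iff₀ hm'] at h1; linarith
  have hr : (m:ℝ) * s ≤ ((i:ℕ):ℝ) + 1 := by rw [le_div_iff₀ hm'] at h2; linarith
  unfold axisCoord
  rcases lt_trichotomy ((q:ℕ)) ((i:ℕ)) with hq | hq | hq
  · have hq' : ((q:ℕ):ℝ) + 1 ≤ ((i:ℕ):ℝ) := by exact_mod_cast hq
    have hx : (1:ℝ) ≤ (m:ℝ)*s - ((q:ℕ):ℝ) := by linarith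
    rw [min_eq_left hx, max_eq_right zero_le_one]
    have hne : q ≠ i := fun hh => by subst hh; omega
    simp [hq, hne]
  · have hqi : q = i := Fin.ext hq
    subst hqi
    have hz : (0:ℝ) ≤ (m:ℝ)*s - ((q:ℕ):ℝ) := by linarith
    have ho : (m:ℝ)*s - ((q:ℕ):ℝ) ≤ 1 := by linarith
    rw [min_eq_right ho, max_eq_right hz]
    simp
  · have hq' : ((i:ℕ):ℝ) + 1 ≤ ((q:ℕ):ℝ) := by exact_mod_cast hq
    have hle : (m:ℝ)*s - ((q:ℕ):ℝ) ≤ 0 := by linarith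
    rw [min_eq_right (le_trans hle zero_le_one), max_eq_left hle]
    have hx1 : ¬ ((q:ℕ) < (i:ℕ)) := by omega
    have hx2 : q ≠ i := fun hh => by subst hh; omega
    simp [hx1, hx2]

lemma axisCoord_zero {m : ℕ} (q : Fin m) : axisCoord m q 0 = 0 := by
  unfold axisCoord
  have hx : (m:ℝ) * 0 - ((q:ℕ):ℝ) ≤ 0 := by
    simp [Nat.cast_nonneg]
  rw [min_eq_right (le_trans hx zero_le_one), max_eq_left hx]

lemma deriv_eventually_affine {f : ℝ → ℝ} {x b c : ℝ}
    (h : f =ᶠ[nhds x] fun y => b * y + c) : deriv f x = b := by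
  have h1 : HasDerivAt (fun y => b * y + c) b x := by
    simpa using ((hasDerivAt_id x).const_mul b).add_const c
  exact (h1.congr_of_eventuallyEq h).deriv

lemma strip_subset {m : ℕ} (hm : 0 < m) (i : Fin m) :
    Set.Icc (((i:ℕ):ℝ)/m) ((((i:ℕ):ℝ)+1)/m) ⊆ Set.Icc (0:ℝ) 1 := by
  have hm' : (0:ℝ) < m := by exact_mod_cast hm
  intro x hx
  constructor
  · exact le_trans (by positivity) hx.1
  · refine le_trans hx.2 ((div_le_one hm').mpr ?_)
    exact_mod_cast i.2

lemma strip_lt {m : ℕ} (hm : 0 < m) (i : Fin m) :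
    ((i:ℕ):ℝ)/m < (((i:ℕ):ℝ)+1)/m := by
  have hm' : (0:ℝ) < m := by exact_mod_cast hm
  exact div_lt_div_of_pos_right (by linarith) hm'

lemma pieces_zero {m n : ℕ} (hm : 0 < m) (hn : 0 < n) (D : ℝ → ℝ → ℝ)
    (hp : ∀ (i : Fin m) (j : Fin n), ∃ β γ δ : ℝ,
      ∀ s ∈ Set.Icc (((i:ℕ):ℝ)/m) ((((i:ℕ):ℝ)+1)/m),
      ∀ t ∈ Set.Icc (((j:ℕ):ℝ)/n) ((((j:ℕ):ℝ)+1)/n),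
        D s t = β*s + γ*t + δ)
    (h0s : ∀ s ∈ Set.Icc (0:ℝ) 1, D s 0 = 0)
    (h0t : ∀ t ∈ Set.Icc (0:ℝ) 1, D 0 t = 0) :
    ∀ s ∈ Set.Icc (0:ℝ) 1, ∀ t ∈ Set.Icc (0:ℝ) 1, D s t = 0 := by
  have hm' : (0:ℝ) < m := by exact_mod_cast hm
  have hn' : (0:ℝ) < n := by exact_mod_cast hn
  choose β γ δ hβ using hp
  -- 0 is in the 0-th strip of any grid
  have h0mem : ∀ (k : ℕ) (hk : 0 < k), (0:ℝ) ∈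
      Set.Icc ((((⟨0,hk⟩ : Fin k):ℕ):ℝ)/k) (((((⟨0,hk⟩ : Fin k):ℕ):ℝ)+1)/k) := by
    intro k hk
    have hk' : (0:ℝ) < k := by exact_mod_cast hk
    simp only [Fin.val_mk, Nat.cast_zero, Set.mem_Icc]
    constructor
    · simp
    · positivity
  -- beta is zero everywhere
  have hβ0 : ∀ (i : Fin m) (j : Fin n), β i j = 0 := by
    intro i
    -- first for j = 0
    have hbase : β i ⟨0, hn⟩ = 0 := by
      have haff : ∀ s ∈ Set.Icc (((i:ℕ):ℝ)/m) ((((i:ℕ):ℝ)+1)/m),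
          β i ⟨0,hn⟩ * s + (γ i ⟨0,hn⟩ * 0 + δ i ⟨0,hn⟩) = 0 * s + 0 := by
        intro s hs
        have e1 := hβ i ⟨0,hn⟩ s hs 0 (h0mem n hn)
        have e2 := h0s s (strip_subset hm i hs)
        linarith
      exact (affine_eq_of_Icc (strip_lt hm i) haff).1
    -- adjacent strips share the beta
    have hstep : ∀ (jv : ℕ) (h1 : jv < n) (h2 : jv + 1 < n),
        β i ⟨jv+1, h2⟩ = β i ⟨jv, h1⟩ := by
      intro jv h1 h2
      set t0 : ℝ := ((jv:ℝ)+1)/n with ht0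
      have hmem1 : t0 ∈ Set.Icc ((((⟨jv,h1⟩ : Fin n):ℕ):ℝ)/n) (((((⟨jv,h1⟩ : Fin n):ℕ):ℝ)+1)/n) := by
        simp only [Fin.val_mk, Set.mem_Icc, ht0]
        exact ⟨by gcongr; linarith, le_refl _⟩
      have hmem2 : t0 ∈ Set.Icc ((((⟨jv+1,h2⟩ : Fin n):ℕ):ℝ)/n) (((((⟨jv+1,h2⟩ : Fin n):ℕ):ℝ)+1)/n) := by
        simp only [Fin.val_mk, Set.mem_Icc, ht0]
        push_cast
        exact ⟨le_refl _, by gcongr; linarith⟩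
      have haff : ∀ s ∈ Set.Icc (((i:ℕ):ℝ)/m) ((((i:ℕ):ℝ)+1)/m),
          β i ⟨jv+1,h2⟩ * s + (γ i ⟨jv+1,h2⟩ * t0 + δ i ⟨jv+1,h2⟩)
            = β i ⟨jv,h1⟩ * s + (γ i ⟨jv,h1⟩ * t0 + δ i ⟨jv,h1⟩) := by
        intro s hs
        have e1 := hβ i ⟨jv+1,h2⟩ s hs t0 hmem2
        have e2 := hβ i ⟨jv,h1⟩ s hs t0 hmem1
        linarith
      exact (affine_eq_of_Icc (strip_lt hm i) haff).1
    have hall : ∀ (jv : ℕ) (h1 : jv < n), β i ⟨jv,h1⟩ = 0 := by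
      intro jv
      induction jv with
      | zero => intro h1; exact hbase
      | succ kv ih =>
        intro h1
        have hk : kv < n := Nat.lt_of_succ_lt h1
        rw [hstep kv hk h1]
        exact ih hk
    intro j
    have := hall j.1 j.2
    simpa using this
  -- main conclusion
  intro s hs t ht
  obtain ⟨j, hj1, hj2⟩ := exists_strip hn ht
  have hval : ∀ (i : Fin m), ∀ s' ∈ Set.Icc (((i:ℕ):ℝ)/m) ((((i:ℕ):ℝ)+1)/m),
      D s' t = γ i j * t + δ i j := by
    intro i s' hs'
    rw [hβ i j s' hs' t ⟨hj1, hj2⟩, hβ0 i j]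
    ring
  have hstep2 : ∀ (iv : ℕ) (h1 : iv < m) (h2 : iv + 1 < m),
      γ (⟨iv+1,h2⟩ : Fin m) j * t + δ ⟨iv+1,h2⟩ j = γ (⟨iv,h1⟩ : Fin m) j * t + δ ⟨iv,h1⟩ j := by
    intro iv h1 h2
    set s0 : ℝ := ((iv:ℝ)+1)/m with hs0
    have hmem1 : s0 ∈ Set.Icc ((((⟨iv,h1⟩ : Fin m):ℕ):ℝ)/m) (((((⟨iv,h1⟩ : Fin m):ℕ):ℝ)+1)/m) := by
      simp only [Fin.val_mk, Set.mem_Icc, hs0]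
      exact ⟨by gcongr; linarith, le_refl _⟩
    have hmem2 : s0 ∈ Set.Icc ((((⟨iv+1,h2⟩ : Fin m):ℕ):ℝ)/m) (((((⟨iv+1,h2⟩ : Fin m):ℕ):ℝ)+1)/m) := by
      simp only [Fin.val_mk, Set.mem_Icc, hs0]
      push_cast
      exact ⟨le_refl _, by gcongr; linarith⟩
    rw [← hval ⟨iv+1,h2⟩ s0 hmem2, ← hval ⟨iv,h1⟩ s0 hmem1]
  have hall2 : ∀ (iv : ℕ) (h1 : iv < m),
      γ (⟨iv,h1⟩ : Fin m) j * t + δ ⟨iv,h1⟩ j = γ (⟨0,hm⟩ : Fin m) j * t + δ ⟨0,hm⟩ j := by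
    intro iv
    induction iv with
    | zero => intro h1; rfl
    | succ kv ih =>
      intro h1
      have hk : kv < m := Nat.lt_of_succ_lt h1
      rw [hstep2 kv hk h1]
      exact ih hk
  obtain ⟨i, hi1, hi2⟩ := exists_strip hm hs
  have e1 : D s t = γ i j * t + δ i j := hval i s ⟨hi1, hi2⟩
  have e2 : D 0 t = γ (⟨0,hm⟩ : Fin m) j * t + δ ⟨0,hm⟩ j := hval ⟨0,hm⟩ 0 (h0mem m hm)
  have e3 := hall2 i.1 i.2
  have e4 : D 0 t = 0 := h0t t ht
  simp only [Fin.eta] at e3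
  rw [e1, e3, ← e2, e4]

lemma sum_ite_both {m n : ℕ} (f : Fin m × Fin n → ℝ) (i : Fin m) (j : Fin n) :
    (∑ p : Fin m × Fin n, if p.1 = i ∧ p.2 = j then f p else 0) = f (i,j) := by
  have hx : ∀ p : Fin m × Fin n, (if p.1 = i ∧ p.2 = j then f p else 0)
      = if p = (i,j) then f p else 0 := by
    intro p
    congr 1
    simp [Prod.ext_iff]
  rw [Finset.sum_congr rfl (fun p _ => hx p), Finset.sum_ite_eq' Finset.univ (i,j) f]
  simp

lemma F_on_rect {m n : ℕ} (hm : 0 < m) (hn : 0 < n) (Ar : Fin m × Fin n → ℝ)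
    (i : Fin m) (j : Fin n) :
    ∃ bF cF eF : ℝ, ∀ s ∈ Set.Icc (((i:ℕ):ℝ)/m) ((((i:ℕ):ℝ)+1)/m),
      ∀ t ∈ Set.Icc (((j:ℕ):ℝ)/n) ((((j:ℕ):ℝ)+1)/n),
      (∑ p : Fin m × Fin n, Ar p * (axisCoord m p.1 s * axisCoord n p.2 t))
        = (Ar (i,j) * m * n) * (s*t) + bF*s + cF*t + eF := by
  set C := ∑ p : Fin m × Fin n, Ar p * ((if ((p.1:ℕ)) < ((i:ℕ)) then (1:ℝ) else 0) * (if ((p.2:ℕ)) < ((j:ℕ)) then (1:ℝ) else 0)) with hC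
  set U := ∑ p : Fin m × Fin n, Ar p * ((if ((p.1:ℕ)) < ((i:ℕ)) then (1:ℝ) else 0) * (if p.2 = j then (1:ℝ) else 0)) with hU
  set V := ∑ p : Fin m × Fin n, Ar p * ((if p.1 = i then (1:ℝ) else 0) * (if ((p.2:ℕ)) < ((j:ℕ)) then (1:ℝ) else 0)) with hV
  refine ⟨V*m - Ar (i,j)*m*((j:ℕ):ℝ), U*n - Ar (i,j)*((i:ℕ):ℝ)*n,
    C - U*((j:ℕ):ℝ) - V*((i:ℕ):ℝ) + Ar (i,j)*((i:ℕ):ℝ)*((j:ℕ):ℝ), ?_⟩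
  intro s hs t ht
  have key : ∀ p : Fin m × Fin n, Ar p * (axisCoord m p.1 s * axisCoord n p.2 t)
      = Ar p * ((if ((p.1:ℕ)) < ((i:ℕ)) then (1:ℝ) else 0) * (if ((p.2:ℕ)) < ((j:ℕ)) then (1:ℝ) else 0))
      + (Ar p * ((if ((p.1:ℕ)) < ((i:ℕ)) then (1:ℝ) else 0) * (if p.2 = j then (1:ℝ) else 0))) * ((n:ℝ)*t - ((j:ℕ):ℝ))
      + (Ar p * ((if p.1 = i then (1:ℝ) else 0) * (if ((p.2:ℕ)) < ((j:ℕ)) then (1:ℝ) else 0))) * ((m:ℝ)*s - ((i:ℕ):ℝ))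
      + (if p.1 = i ∧ p.2 = j then Ar p else 0) * (((m:ℝ)*s - ((i:ℕ):ℝ)) * ((n:ℝ)*t - ((j:ℕ):ℝ))) := by
    intro p
    rw [axisCoord_eval hm i p.1 hs.1 hs.2, axisCoord_eval hn j p.2 ht.1 ht.2]
    by_cases h1 : p.1 = i <;> by_cases h2 : p.2 = j <;> simp [h1, h2] <;> ring
  rw [Finset.sum_congr rfl (fun p _ => key p)]
  rw [Finset.sum_add_distrib, Finset.sum_add_distrib, Finset.sum_add_distrib,
      ← Finset.sum_mul, ← Finset.sum_mul, ← Finset.sum_mul, ← hC, ← hU, ← hV,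
      sum_ite_both Ar i j]
  ring

def Gslope {m n : ℕ} (Ar : Fin m × Fin n → ℝ) (i : Fin m) (t' : ℝ) : ℝ :=
  ∑ p : Fin m × Fin n, Ar p * ((m:ℝ) * (if p.1 = i then 1 else 0)) * axisCoord n p.2 t'

def Gconst {m n : ℕ} (Ar : Fin m × Fin n → ℝ) (i : Fin m) (t' : ℝ) : ℝ :=
  ∑ p : Fin m × Fin n,
    Ar p * ((if ((p.1:ℕ)) < ((i:ℕ)) then (1:ℝ) else 0) - ((i:ℕ):ℝ) * (if p.1 = i then 1 else 0))
      * axisCoord n p.2 t'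

lemma F_affine_s {m n : ℕ} (hm : 0 < m) (Ar : Fin m × Fin n → ℝ) (i : Fin m)
    {s' : ℝ} (hs' : s' ∈ Set.Icc (((i:ℕ):ℝ)/m) ((((i:ℕ):ℝ)+1)/m)) (t' : ℝ) :
    (∑ p : Fin m × Fin n, Ar p * (axisCoord m p.1 s' * axisCoord n p.2 t'))
      = Gslope Ar i t' * s' + Gconst Ar i t' := by
  unfold Gslope Gconst
  rw [Finset.sum_mul, ← Finset.sum_add_distrib]
  apply Finset.sum_congr rfl
  intro p _
  rw [axisCoord_eval hm i p.1 hs'.1 hs'.2]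
  ring

lemma Gslope_affine {m n : ℕ} (hn : 0 < n) (Ar : Fin m × Fin n → ℝ) (i : Fin m) (j : Fin n) :
    ∃ K : ℝ, ∀ t' ∈ Set.Icc (((j:ℕ):ℝ)/n) ((((j:ℕ):ℝ)+1)/n),
      Gslope Ar i t' = ((m:ℝ)*(n:ℝ)*Ar (i,j)) * t' + K := by
  refine ⟨∑ p : Fin m × Fin n, Ar p * ((m:ℝ) * (if p.1 = i then 1 else 0))
      * ((if ((p.2:ℕ)) < ((j:ℕ)) then (1:ℝ) else 0) - ((j:ℕ):ℝ) * (if p.2 = j then 1 else 0)), ?_⟩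
  intro t' ht'
  unfold Gslope
  have key : ∀ p : Fin m × Fin n, Ar p * ((m:ℝ) * (if p.1 = i then 1 else 0)) * axisCoord n p.2 t'
      = (if p.1 = i ∧ p.2 = j then ((m:ℝ)*(n:ℝ)*Ar p) else 0) * t'
        + Ar p * ((m:ℝ) * (if p.1 = i then 1 else 0))
          * ((if ((p.2:ℕ)) < ((j:ℕ)) then (1:ℝ) else 0) - ((j:ℕ):ℝ) * (if p.2 = j then 1 else 0)) := by
    intro p
    rw [axisCoord_eval hn j p.2 ht'.1 ht'.2]
    by_cases h1 : p.1 = i <;> by_cases h2 : p.2 = j <;> simp [h1, h2] <;> ring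
  rw [Finset.sum_congr rfl (fun p _ => key p), Finset.sum_add_distrib, ← Finset.sum_mul,
      sum_ite_both (fun p => (m:ℝ)*(n:ℝ)*Ar p) i j]

lemma d12_F {m n : ℕ} (hm : 0 < m) (hn : 0 < n) (Ar : Fin m × Fin n → ℝ)
    (i : Fin m) (j : Fin n) {s t : ℝ}
    (hs : s ∈ Set.Ioo (((i:ℕ):ℝ)/m) ((((i:ℕ):ℝ)+1)/m))
    (ht : t ∈ Set.Ioo (((j:ℕ):ℝ)/n) ((((j:ℕ):ℝ)+1)/n)) :
    d12 (fun s' t' => ∑ p : Fin m × Fin n, Ar p * (axisCoord m p.1 s' * axisCoord n p.2 t')) s t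
      = (m:ℝ)*(n:ℝ)*Ar (i,j) := by
  have hinner : ∀ t', deriv (fun s' => ∑ p : Fin m × Fin n,
      Ar p * (axisCoord m p.1 s' * axisCoord n p.2 t')) s = Gslope Ar i t' := by
    intro t'
    apply deriv_eventually_affine (c := Gconst Ar i t')
    filter_upwards [isOpen_Ioo.mem_nhds hs] with s' hs'
    exact F_affine_s hm Ar i (Set.Ioo_subset_Icc_self hs') t'
  unfold d12
  simp only [hinner]
  obtain ⟨K, hK⟩ := Gslope_affine hn Ar i j
  apply deriv_eventually_affine (c := K)
  filter_upwards [isOpen_Ioo.mem_nhds ht] with t' ht'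
  exact hK t' (Set.Ioo_subset_Icc_self ht')

lemma d12_X {m n : ℕ} (hm : 0 < m) (hn : 0 < n) (Ar : Fin m × Fin n → ℝ)
    (g h : ℝ → ℝ) (hg : PWLinearGrid m g) (X1 : ℝ → ℝ → ℝ)
    (hid : ∀ s ∈ Set.Icc (0:ℝ) 1, ∀ t ∈ Set.Icc (0:ℝ) 1,
      X1 s t = (∑ p : Fin m × Fin n, Ar p * (axisCoord m p.1 s * axisCoord n p.2 t)) + g s + h t)
    (i : Fin m) (j : Fin n) {s t : ℝ}
    (hs : s ∈ Set.Ioo (((i:ℕ):ℝ)/m) ((((i:ℕ):ℝ)+1)/m))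
    (ht : t ∈ Set.Ioo (((j:ℕ):ℝ)/n) ((((j:ℕ):ℝ)+1)/n)) :
    d12 X1 s t = (m:ℝ)*(n:ℝ)*Ar (i,j) := by
  obtain ⟨bg, cg, hbg⟩ := hg i
  have hinner : ∀ t' ∈ Set.Icc (0:ℝ) 1,
      deriv (fun s' => X1 s' t') s = Gslope Ar i t' + bg := by
    intro t' ht'
    apply deriv_eventually_affine (c := Gconst Ar i t' + (cg + h t'))
    filter_upwards [isOpen_Ioo.mem_nhds hs] with s' hs'
    have hs'I := Set.Ioo_subset_Icc_self hs'
    rw [hid s' (strip_subset hm i hs'I) t' ht', F_affine_s hm Ar i hs'I t', hbg s' hs'I]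
    ring
  unfold d12
  obtain ⟨K, hK⟩ := Gslope_affine hn Ar i j
  apply deriv_eventually_affine (c := K + bg)
  filter_upwards [isOpen_Ioo.mem_nhds ht] with t' ht'
  have ht'J := Set.Ioo_subset_Icc_self ht'
  rw [hinner t' (strip_subset hn j ht'J), hK t' ht'J]
  ring

lemma mem_strip_left {m : ℕ} (hm : 0 < m) (i : Fin m) :
    ((i:ℕ):ℝ)/m ∈ Set.Icc (((i:ℕ):ℝ)/m) ((((i:ℕ):ℝ)+1)/m) :=
  ⟨le_refl _, (strip_lt hm i).le⟩

lemma mem_strip_right {m : ℕ} (hm : 0 < m) (i : Fin m) :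
    (((i:ℕ):ℝ)+1)/m ∈ Set.Icc (((i:ℕ):ℝ)/m) ((((i:ℕ):ℝ)+1)/m) :=
  ⟨(strip_lt hm i).le, le_refl _⟩

lemma decomp_unique_entry {m n d : ℕ} (hm : 0 < m) (hn : 0 < n)
    (X : ℝ → ℝ → Fin d → ℝ) (A' : Matrix (Fin d) (Fin m × Fin n) ℝ)
    (hA' : AxisDecomp m n d X A') (l : Fin d) (i : Fin m) (j : Fin n) :
    A' l (i,j) = X ((((i:ℕ):ℝ)+1)/m) ((((j:ℕ):ℝ)+1)/n) l
      - X (((i:ℕ):ℝ)/m) ((((j:ℕ):ℝ)+1)/n) l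
      - X ((((i:ℕ):ℝ)+1)/m) (((j:ℕ):ℝ)/n) l
      + X (((i:ℕ):ℝ)/m) (((j:ℕ):ℝ)/n) l := by
  have hm' : (0:ℝ) < m := by exact_mod_cast hm
  have hn' : (0:ℝ) < n := by exact_mod_cast hn
  obtain ⟨g, h, hg, hh, hid⟩ := hA'
  have hs0 := mem_strip_left hm i
  have hs1 := mem_strip_right hm i
  have ht0 := mem_strip_left hn j
  have ht1 := mem_strip_right hn j
  have hs001 := strip_subset hm i hs0
  have hs101 := strip_subset hm i hs1
  have ht001 := strip_subset hn j ht0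
  have ht101 := strip_subset hn j ht1
  rw [hid _ hs101 _ ht101 l, hid _ hs001 _ ht101 l, hid _ hs101 _ ht001 l,
      hid _ hs001 _ ht001 l]
  have e1 : (m:ℝ) * ((((i:ℕ):ℝ)+1)/m) - ((i:ℕ):ℝ) = 1 := by field_simp; ring
  have e0 : (m:ℝ) * (((i:ℕ):ℝ)/m) - ((i:ℕ):ℝ) = 0 := by field_simp; ring
  have f1 : (n:ℝ) * ((((j:ℕ):ℝ)+1)/n) - ((j:ℕ):ℝ) = 1 := by field_simp; ring
  have f0 : (n:ℝ) * (((j:ℕ):ℝ)/n) - ((j:ℕ):ℝ) = 0 := by field_simp; ring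
  have key : ∀ p : Fin m × Fin n,
      A' l p * (axisCoord m p.1 ((((i:ℕ):ℝ)+1)/m) * axisCoord n p.2 ((((j:ℕ):ℝ)+1)/n))
      - A' l p * (axisCoord m p.1 (((i:ℕ):ℝ)/m) * axisCoord n p.2 ((((j:ℕ):ℝ)+1)/n))
      - A' l p * (axisCoord m p.1 ((((i:ℕ):ℝ)+1)/m) * axisCoord n p.2 (((j:ℕ):ℝ)/n))
      + A' l p * (axisCoord m p.1 (((i:ℕ):ℝ)/m) * axisCoord n p.2 (((j:ℕ):ℝ)/n))
      = (if p.1 = i ∧ p.2 = j then A' l p else 0) := by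
    intro p
    rw [axisCoord_eval hm i p.1 hs1.1 hs1.2, axisCoord_eval hm i p.1 hs0.1 hs0.2,
        axisCoord_eval hn j p.2 ht1.1 ht1.2, axisCoord_eval hn j p.2 ht0.1 ht0.2,
        e1, e0, f1, f0]
    by_cases h1 : p.1 = i <;> by_cases h2 : p.2 = j <;> simp [h1, h2] <;> ring
  have hsum : (∑ p : Fin m × Fin n,
        A' l p * (axisCoord m p.1 ((((i:ℕ):ℝ)+1)/m) * axisCoord n p.2 ((((j:ℕ):ℝ)+1)/n)))
      - (∑ p : Fin m × Fin n,
        A' l p * (axisCoord m p.1 (((i:ℕ):ℝ)/m) * axisCoord n p.2 ((((j:ℕ):ℝ)+1)/n)))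
      - (∑ p : Fin m × Fin n,
        A' l p * (axisCoord m p.1 ((((i:ℕ):ℝ)+1)/m) * axisCoord n p.2 (((j:ℕ):ℝ)/n)))
      + (∑ p : Fin m × Fin n,
        A' l p * (axisCoord m p.1 (((i:ℕ):ℝ)/m) * axisCoord n p.2 (((j:ℕ):ℝ)/n)))
      = A' l (i,j) := by
    rw [← Finset.sum_sub_distrib, ← Finset.sum_sub_distrib, ← Finset.sum_add_distrib,
        Finset.sum_congr rfl (fun p _ => key p), sum_ite_both (A' l) i j]
  linarith [hsum]

lemma zero_mem_strip0 {k : ℕ} (hk : 0 < k) :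
    (0:ℝ) ∈ Set.Icc ((((⟨0,hk⟩ : Fin k):ℕ):ℝ)/k) (((((⟨0,hk⟩ : Fin k):ℕ):ℝ)+1)/k) := by
  have hk' : (0:ℝ) < k := by exact_mod_cast hk
  simp only [Fin.val_mk, Nat.cast_zero, Set.mem_Icc]
  constructor
  · simp
  · positivity

lemma main_decomp {m n d : ℕ} (hm : 0 < m) (hn : 0 < n)
    (X : ℝ → ℝ → Fin d → ℝ) (hX : PWBilinear m n d X) :
    ∃ A : Matrix (Fin d) (Fin m × Fin n) ℝ, AxisDecomp m n d X A := by
  have hm' : (0:ℝ) < m := by exact_mod_cast hm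
  have hn' : (0:ℝ) < n := by exact_mod_cast hn
  choose ca cb cc ce hco using hX
  set i0 : Fin m := ⟨0, hm⟩ with hi0
  set j0 : Fin n := ⟨0, hn⟩ with hj0
  have h0m := zero_mem_strip0 hm
  have h0n := zero_mem_strip0 hn
  refine ⟨fun l p => ca p.1 p.2 l / ((m:ℝ)*(n:ℝ)),
    fun l s => X s 0 l, fun l t => X 0 t l - X 0 0 l, ?_, ?_, ?_⟩
  · intro l i
    refine ⟨cb i j0 l, ce i j0 l, fun s hs => ?_⟩
    try dsimp only
    rw [hco i j0 l s hs 0 h0n]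
    ring
  · intro l j
    refine ⟨cc i0 j l, ce i0 j l - X 0 0 l, fun t ht => ?_⟩
    try dsimp only
    rw [hco i0 j l 0 h0m t ht]
    ring
  · intro s hs t ht l
    have key : ∀ s' ∈ Set.Icc (0:ℝ) 1, ∀ t' ∈ Set.Icc (0:ℝ) 1,
        (fun s' t' => X s' t' l - X s' 0 l - X 0 t' l + X 0 0 l
          - ∑ p : Fin m × Fin n,
              (ca p.1 p.2 l / ((m:ℝ)*(n:ℝ))) * (axisCoord m p.1 s' * axisCoord n p.2 t')) s' t' = 0 := by
      apply pieces_zero hm hn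
      · intro i j
        obtain ⟨bF, cF, eF, hF⟩ := F_on_rect hm hn
          (fun p => ca p.1 p.2 l / ((m:ℝ)*(n:ℝ))) i j
        refine ⟨cb i j l - cb i j0 l - bF, cc i j l - cc i0 j l - cF,
          ce i j l - ce i j0 l - ce i0 j l + ce i0 j0 l - eF, ?_⟩
        intro s' hs' t' ht'
        try dsimp only
        rw [hco i j l s' hs' t' ht', hco i j0 l s' hs' 0 h0n,
            hco i0 j l 0 h0m t' ht', hco i0 j0 l 0 h0m 0 h0n, hF s' hs' t' ht']
        have hAc : ca i j l / ((m:ℝ)*(n:ℝ)) * (m:ℝ) * (n:ℝ) = ca i j l := by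
          field_simp
        linear_combination (-(s'*t')) * hAc
      · intro s' _
        try dsimp only
        have hz : (∑ p : Fin m × Fin n,
            (ca p.1 p.2 l / ((m:ℝ)*(n:ℝ))) * (axisCoord m p.1 s' * axisCoord n p.2 0)) = 0 := by
          apply Finset.sum_eq_zero
          intro p _
          rw [axisCoord_zero]
          ring
        rw [hz]
        ring
      · intro t' _
        try dsimp only
        have hz : (∑ p : Fin m × Fin n,
            (ca p.1 p.2 l / ((m:ℝ)*(n:ℝ))) * (axisCoord m p.1 0 * axisCoord n p.2 t')) = 0 := by
          apply Finset.sum_eq_zero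
          intro p _
          rw [axisCoord_zero]
          ring
        rw [hz]
        ring
    have := key s hs t ht
    try dsimp only at this
    linarith [this]

lemma hyperplane_null {k : ℕ} (a : Fin k) (c : ℝ) :
    (volume : Measure ((Fin k → ℝ) × (Fin k → ℝ))) {p | p.1 a = c} = 0 := by
  have h1 : {p : (Fin k → ℝ) × (Fin k → ℝ) | p.1 a = c}
      = {x : Fin k → ℝ | x a = c} ×ˢ (Set.univ : Set (Fin k → ℝ)) := by
    ext p
    simp [Set.mem_prod]
  have h0 : volume {x : Fin k → ℝ | x a = c} = 0 := by
    rw [MeasureTheory.volume_pi]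
    exact MeasureTheory.Measure.pi_hyperplane (fun _ => (volume : Measure ℝ)) a c
  rw [h1, MeasureTheory.Measure.volume_eq_prod, MeasureTheory.Measure.prod_prod, h0, zero_mul]

lemma hyperplane_null' {k : ℕ} (a : Fin k) (c : ℝ) :
    (volume : Measure ((Fin k → ℝ) × (Fin k → ℝ))) {p | p.2 a = c} = 0 := by
  have h1 : {p : (Fin k → ℝ) × (Fin k → ℝ) | p.2 a = c}
      = (Set.univ : Set (Fin k → ℝ)) ×ˢ {x : Fin k → ℝ | x a = c} := by
    ext p
    simp [Set.mem_prod]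
  have h0 : volume {x : Fin k → ℝ | x a = c} = 0 := by
    rw [MeasureTheory.volume_pi]
    exact MeasureTheory.Measure.pi_hyperplane (fun _ => (volume : Measure ℝ)) a c
  rw [h1, MeasureTheory.Measure.volume_eq_prod, MeasureTheory.Measure.prod_prod, h0, mul_zero]

lemma memSig_congr {m n d : ℕ} (hm : 0 < m) (hn : 0 < n)
    (X : ℝ → ℝ → Fin d → ℝ) (A' : Matrix (Fin d) (Fin m × Fin n) ℝ)
    (hA' : AxisDecomp m n d X A') (k : ℕ) (idx : Fin k → Fin d) :
    memSig (fun a s t => X s t (idx a))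
      = memSig (fun a s t =>
          ∑ p : Fin m × Fin n, A' (idx a) p * (axisCoord m p.1 s * axisCoord n p.2 t)) := by
  obtain ⟨g, h, hg, hh, hid⟩ := hA'
  unfold memSig
  apply MeasureTheory.integral_congr_ae
  rw [Filter.EventuallyEq, MeasureTheory.ae_iff]
  set B : Set ((Fin k → ℝ) × (Fin k → ℝ)) :=
    ((Set.univ : Set (Fin k)).pi (fun _ => Set.Icc (0:ℝ) 1)) ×ˢ
    ((Set.univ : Set (Fin k)).pi (fun _ => Set.Icc (0:ℝ) 1)) with hB
  set U : Set ((Fin k → ℝ) × (Fin k → ℝ)) :=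
    ⋃ a : Fin k,
      ((⋃ q ∈ Finset.range (m+1), {p : (Fin k → ℝ) × (Fin k → ℝ) | p.1 a = (q:ℝ)/m})
        ∪ (⋃ q ∈ Finset.range (n+1), {p : (Fin k → ℝ) × (Fin k → ℝ) | p.2 a = (q:ℝ)/n})) with hU
  apply measure_mono_null (t := U ∪ Bᶜ)
  · -- subset
    intro p hp
    simp only [Set.mem_setOf_eq] at hp
    by_contra hbad
    apply hp
    simp only [Set.mem_union, Set.mem_iUnion, Set.mem_setOf_eq, not_or, not_exists,
      Set.mem_compl_iff, not_not, hU, hB, Set.mem_prod, Set.mem_pi, Set.mem_univ,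
      forall_const, Finset.mem_range] at hbad
    obtain ⟨hU', hB'⟩ := hbad
    apply Finset.prod_congr rfl
    intro a _
    have hs01 : p.1 a ∈ Set.Icc (0:ℝ) 1 := hB'.1 a
    have ht01 : p.2 a ∈ Set.Icc (0:ℝ) 1 := hB'.2 a
    have hsne : ∀ q : ℕ, q ≤ m → p.1 a ≠ (q:ℝ)/m := by
      intro q hq
      exact (hU' a).1 q (by omega)
    have htne : ∀ q : ℕ, q ≤ n → p.2 a ≠ (q:ℝ)/n := by
      intro q hq
      exact (hU' a).2 q (by omega)
    obtain ⟨i, hi1, hi2⟩ := exists_strip_open hm hs01 hsne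
    obtain ⟨j, hj1, hj2⟩ := exists_strip_open hn ht01 htne
    rw [d12_X hm hn (A' (idx a)) (g (idx a)) (h (idx a)) (hg (idx a))
        (fun s t => X s t (idx a))
        (fun s hs t ht => hid s hs t ht (idx a)) i j ⟨hi1, hi2⟩ ⟨hj1, hj2⟩,
      d12_F hm hn (A' (idx a)) i j ⟨hi1, hi2⟩ ⟨hj1, hj2⟩]
  · -- null
    apply measure_union_null
    · have hU0 : volume U = 0 := by
        apply MeasureTheory.measure_iUnion_null
        intro a
        apply measure_union_null
        · refine (MeasureTheory.measure_biUnion_null_iff (Finset.range (m+1)).countable_toSet).2 ?_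
          intro q _
          exact hyperplane_null a ((q:ℝ)/m)
        · refine (MeasureTheory.measure_biUnion_null_iff (Finset.range (n+1)).countable_toSet).2 ?_
          intro q _
          exact hyperplane_null' a ((q:ℝ)/n)
      have hle := MeasureTheory.Measure.le_iff'.1
        (MeasureTheory.Measure.restrict_le_self
          (μ := volume) (s := (orderedSimplex k) ×ˢ (orderedSimplex k))) U
      rw [hU0] at hle
      exact le_antisymm hle (zero_le)
    · have hBmeas : MeasurableSet B := by
        exact (MeasurableSet.univ_pi (fun _ => measurableSet_Icc)).prod
          (MeasurableSet.univ_pi (fun _ => measurableSet_Icc))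
      rw [MeasureTheory.Measure.restrict_apply hBmeas.compl]
      have hTB : (orderedSimplex k) ×ˢ (orderedSimplex k) ⊆ B := by
        intro p hp
        refine ⟨fun a _ => hp.1.2 a, fun a _ => hp.2.2 a⟩
      refine measure_mono_null (fun p hp => absurd (hTB hp.2) hp.1) measure_empty

/-- every piecewise bilinear membrane of order `(m,n)` has a unique
decomposition `X = A ∘ Axis^{m,n} + R` as above, and consequently
`σ(X) = σ(A ∘ Axis^{m,n})`. -/
theorem pw_bilinear_axis_decomposition (m n d : ℕ) (hm : 0 < m) (hn : 0 < n)
    (X : ℝ → ℝ → Fin d → ℝ) (hX : PWBilinear m n d X) :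
    (∃! A : Matrix (Fin d) (Fin m × Fin n) ℝ, AxisDecomp m n d X A)
    ∧ (∀ A : Matrix (Fin d) (Fin m × Fin n) ℝ, AxisDecomp m n d X A →
        ∀ (k : ℕ) (i : Fin k → Fin d),
          memSig (fun a s t => X s t (i a))
            = memSig (fun a s t =>
                ∑ p : Fin m × Fin n,
                  A (i a) p * (axisCoord m p.1 s * axisCoord n p.2 t))) := by
  obtain ⟨A, hA⟩ := main_decomp hm hn X hX
  constructor
  · refine ⟨A, hA, ?_⟩
    intro A' hA'
    funext l p
    have h1 := decomp_unique_entry hm hn X A' hA' l p.1 p.2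
    have h2 := decomp_unique_entry hm hn X A hA l p.1 p.2
    rw [Prod.mk.eta] at h1 h2
    rw [h1, h2]
  · intro A' hA' k idx
    exact memSig_congr hm hn X A' hA' k idx
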